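/- (q-Chu–Vandermonde) For a nonnegative integer n, Σ_{j=0}^{n} (a;q)_j (q^{−n};q)_j (c qⁿ/a)^j / ((c;q)_j (q;q)_j) = (c/a;q)ₙ/(c;q)ₙ. -/

import Mathlib

noncomputable section

/-- The field `ℚ(q,a,c)` of rational functions in three variables. -/
abbrev K : Type := FractionRing (MvPolynomial (Fin 3) ℚ)

def q : K := algebraMap (MvPolynomial (Fin 3) ℚ) K (MvPolynomial.X 0)
def a : K := algebraMap (MvPolynomial (Fin 3) ℚ) K (MvPolynomial.X 1)
def c : K := algebraMap (MvPolynomial (Fin 3) ℚ) K (MvPolynomial.X 2)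

/-- The q-Pochhammer symbol `(x;q)_j = ∏_{t=0}^{j−1}(1 − x q^t)`. -/
def qPoch (x : K) (j : ℕ) : K :=
  ∏ t ∈ Finset.range j, (1 - x * q ^ t)

namespace QCV

/-- the summand -/
def T (n j : ℕ) : K :=
  qPoch a j * qPoch (q ^ (-(n : ℤ))) j * (c * q ^ n / a) ^ j /
        (qPoch c j * qPoch q j)

/-- the WZ certificate -/
def G (n j : ℕ) : K :=
  T (n + 1) j * q ^ n * (1 - q ^ j) * (q - c * q ^ j) /
    (q ^ j * (q ^ n * q - 1) * (1 - c * q ^ n))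

lemma alg_ne_zero {p : MvPolynomial (Fin 3) ℚ}
    (h : MvPolynomial.eval ![(1:ℚ)/2, 1/3, 1/5] p ≠ 0) :
    algebraMap (MvPolynomial (Fin 3) ℚ) K p ≠ 0 := by
  intro h0
  apply h
  have hp : p = 0 := IsFractionRing.injective (MvPolynomial (Fin 3) ℚ) K (by simpa using h0)
  simp [hp]

lemma q_ne : q ≠ 0 := by
  apply alg_ne_zero
  simp

lemma a_ne : a ≠ 0 := by
  apply alg_ne_zero
  simp

lemma one_sub_q_pow_ne (k : ℕ) : (1 : K) - q ^ (k + 1) ≠ 0 := by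
  have h : (1 : K) - q ^ (k + 1) =
      algebraMap (MvPolynomial (Fin 3) ℚ) K (1 - MvPolynomial.X 0 ^ (k + 1)) := by
    simp [q]
  rw [h]
  apply alg_ne_zero
  have h2 : ((1:ℚ)/2) ^ (k + 1) < 1 :=
    pow_lt_one₀ (by norm_num) (by norm_num) k.succ_ne_zero
  simp only [map_sub, map_one, map_pow, MvPolynomial.eval_X]
  norm_num
  intro hcon
  linarith

lemma one_sub_c_q_pow_ne (k : ℕ) : (1 : K) - c * q ^ k ≠ 0 := by
  have h : (1 : K) - c * q ^ k =
      algebraMap (MvPolynomial (Fin 3) ℚ) K (1 - MvPolynomial.X 2 * MvPolynomial.X 0 ^ k) := by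
    simp [q, c]
  rw [h]
  apply alg_ne_zero
  have h1 : ((1:ℚ)/2) ^ k ≤ 1 := pow_le_one₀ (by norm_num) (by norm_num)
  simp only [map_sub, map_one, map_mul, map_pow, MvPolynomial.eval_X]
  norm_num
  intro hcon
  have hv : (![(1:ℚ)/2, 1/3, 1/5] 2) = 1/5 := rfl
  rw [hv] at hcon
  nlinarith

lemma qPoch_q_ne (j : ℕ) : qPoch q j ≠ 0 := by
  unfold qPoch
  apply Finset.prod_ne_zero_iff.mpr
  intro t _
  have := one_sub_q_pow_ne t
  rw [pow_succ] at this
  intro h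
  apply this
  rw [← h]
  ring

lemma qPoch_c_ne (j : ℕ) : qPoch c j ≠ 0 := by
  unfold qPoch
  apply Finset.prod_ne_zero_iff.mpr
  intro t _
  exact one_sub_c_q_pow_ne t

lemma qPoch_succ (x : K) (j : ℕ) :
    qPoch x (j + 1) = qPoch x j * (1 - x * q ^ j) :=
  Finset.prod_range_succ _ _

lemma qPoch_shift (x : K) (j : ℕ) :
    qPoch (x * q⁻¹) (j + 1) = (1 - x * q⁻¹) * qPoch x j := by
  unfold qPoch
  have hq := q_ne
  rw [Finset.prod_range_succ', pow_zero, mul_one, mul_comm]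
  congr 1
  apply Finset.prod_congr rfl
  intro t _
  have h : x * q⁻¹ * q ^ (t + 1) = x * q ^ t := by
    rw [pow_succ]
    field_simp
  rw [h]

lemma qPoch_cross (n j : ℕ) :
    qPoch ((q ^ n)⁻¹) j =
      qPoch ((q ^ n * q)⁻¹) j * (1 - (q ^ n * q)⁻¹ * q ^ j) / (1 - (q ^ n * q)⁻¹) := by
  have hz : (1 : K) - (q ^ n * q)⁻¹ ≠ 0 := by
    rw [sub_ne_zero]
    intro h
    have h2 : q ^ n * q = 1 := by
      rw [← inv_inv (q ^ n * q), ← h, inv_one]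
    have := one_sub_q_pow_ne n
    rw [pow_succ] at this
    apply this
    rw [h2]
    ring
  rw [eq_div_iff hz]
  have h1 : qPoch ((q ^ n)⁻¹ * q⁻¹) (j + 1) = (1 - (q ^ n)⁻¹ * q⁻¹) * qPoch ((q ^ n)⁻¹) j :=
    qPoch_shift _ _
  have h2 : qPoch ((q ^ n)⁻¹ * q⁻¹) (j + 1)
      = qPoch ((q ^ n)⁻¹ * q⁻¹) j * (1 - (q ^ n)⁻¹ * q⁻¹ * q ^ j) := qPoch_succ _ _
  have h3 : ((q:K) ^ n * q)⁻¹ = (q ^ n)⁻¹ * q⁻¹ := by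
    rw [mul_inv]
  rw [h3]
  rw [h2] at h1
  linear_combination -h1

lemma T_top (n : ℕ) : T n (n + 1) = 0 := by
  unfold T
  have hz : qPoch (q ^ (-(n : ℤ))) (n + 1) = 0 := by
    unfold qPoch
    apply Finset.prod_eq_zero (Finset.self_mem_range_succ n)
    have hq := q_ne
    rw [zpow_neg, zpow_natCast]
    field_simp
    ring
  rw [hz]
  ring

set_option maxHeartbeats 2000000 in
lemma key (n j : ℕ) :
    T (n + 1) j - (1 - c / a * q ^ n) / (1 - c * q ^ n) * T n j = G n (j + 1) - G n j := by
  have hq := q_ne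
  have ha := a_ne
  have hz : ∀ m : ℕ, q ^ (-(m : ℤ)) = (q ^ m)⁻¹ := fun m => by
    rw [zpow_neg, zpow_natCast]
  unfold G T
  simp only [hz, qPoch_cross n j, qPoch_succ, pow_succ]
  have hw : c * (q ^ n * q) / a = c * q ^ n / a * q := by ring
  rw [hw, mul_pow]
  have hX : (q : K) ^ j ≠ 0 := pow_ne_zero _ hq
  have hY : (q : K) ^ n ≠ 0 := pow_ne_zero _ hq
  have hYq : (q : K) ^ n * q ≠ 0 := mul_ne_zero hY hq
  have hcX : (1 : K) - c * q ^ j ≠ 0 := one_sub_c_q_pow_ne j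
  have hcY : (1 : K) - c * q ^ n ≠ 0 := one_sub_c_q_pow_ne n
  have hqX : (1 : K) - q * q ^ j ≠ 0 := by
    have := one_sub_q_pow_ne j
    rw [pow_succ] at this
    intro h; apply this; linear_combination h
  have hqY1 : (q : K) ^ n * q - 1 ≠ 0 := by
    have := one_sub_q_pow_ne n
    rw [pow_succ] at this
    intro h; apply this; linear_combination -h
  have hZ : (1 : K) - (q ^ n * q)⁻¹ ≠ 0 := by
    rw [sub_ne_zero]
    intro h
    apply hqY1
    rw [← inv_inv ((q:K) ^ n * q), ← h, inv_one]
    ring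
  have hC : qPoch c j ≠ 0 := qPoch_c_ne j
  have hD : qPoch q j ≠ 0 := qPoch_q_ne j
  set X := (q : K) ^ j with hXd
  set Y := (q : K) ^ n with hYd
  set W := (c * Y / a) ^ j with hWd
  set P := qPoch a j with hPd
  set B := qPoch ((Y * q)⁻¹) j with hBd
  set C := qPoch c j with hCd
  set D := qPoch q j with hDd
  clear_value X Y W P B C D
  clear hXd hYd hWd hPd hBd hCd hDd hz
  have e1 : (1:K) - (Y * q)⁻¹ * X = (Y * q - X) / (Y * q) := by field_simp
  have e2 : (1:K) - (Y * q)⁻¹ = (Y * q - 1) / (Y * q) := by field_simp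
  have e3 : (1:K) - c / a * Y = (a - c * Y) / a := by field_simp
  rw [e1, e2, e3]
  have hbig : a * c * Y * C ^ 2 * D ^ 2 - a * c * Y ^ 2 * q * C ^ 2 * D ^ 2 +
      (a * Y * q * C ^ 2 * D ^ 2 - a * C ^ 2 * D ^ 2) ≠ 0 := by
    have hfact : a * c * Y * C ^ 2 * D ^ 2 - a * c * Y ^ 2 * q * C ^ 2 * D ^ 2 +
        (a * Y * q * C ^ 2 * D ^ 2 - a * C ^ 2 * D ^ 2)
        = a * C ^ 2 * D ^ 2 * ((1 - c * Y) * (Y * q - 1)) := by ring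
    rw [hfact]
    exact mul_ne_zero (mul_ne_zero (mul_ne_zero ha (pow_ne_zero _ hC)) (pow_ne_zero _ hD))
      (mul_ne_zero hcY hqY1)
  field_simp [hbig]
  have hne1 : C * D * (a * (1 - c * Y) * ((Y * q - 1) * (C * D))) ≠ 0 := by
    apply_rules [mul_ne_zero]
  have hne2 : Y * q * a * (C * (1 - c * X) * (D * (1 - q * X))) *
      (X * q * (Y * q - 1) * (1 - c * Y)) ≠ 0 := by
    apply_rules [mul_ne_zero]
  have hcq : (1 - X * c) * (1 - X * q) ≠ 0 := by
    rw [mul_comm X c, mul_comm X q]; exact mul_ne_zero hcX hqX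
  have hdiv : c * (Y * q - X) * (1 - X * a) * (1 - X * c) * (1 - X * q) /
      ((1 - X * c) * (1 - X * q)) = c * (Y * q - X) * (1 - X * a) := by
    rw [div_eq_iff hcq]; ring
  rw [hdiv]
  ring

lemma main (n : ℕ) :
    ∑ j ∈ Finset.range (n + 1), T n j = qPoch (c / a) n / qPoch c n := by
  induction n with
  | zero => simp [T, qPoch]
  | succ n ih =>
    have hstep : ∀ j, T (n + 1) j
        = (1 - c / a * q ^ n) / (1 - c * q ^ n) * T n j + (G n (j + 1) - G n j) := by
      intro j
      have := key n j
      linear_combination this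
    calc ∑ j ∈ Finset.range (n + 1 + 1), T (n + 1) j
        = ∑ j ∈ Finset.range (n + 2),
            ((1 - c / a * q ^ n) / (1 - c * q ^ n) * T n j + (G n (j + 1) - G n j)) := by
          exact Finset.sum_congr rfl fun j _ => hstep j
      _ = (1 - c / a * q ^ n) / (1 - c * q ^ n) * ∑ j ∈ Finset.range (n + 2), T n j
            + (G n (n + 2) - G n 0) := by
          rw [Finset.sum_add_distrib, Finset.mul_sum, Finset.sum_range_sub (fun j => G n j)]
      _ = (1 - c / a * q ^ n) / (1 - c * q ^ n) * (qPoch (c / a) n / qPoch c n) := by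
          rw [Finset.sum_range_succ, T_top n, add_zero, ih]
          have hG0 : G n 0 = 0 := by
            unfold G
            simp
          have hGtop : G n (n + 2) = 0 := by
            unfold G
            rw [T_top (n + 1)]
            ring
          rw [hG0, hGtop]
          ring
      _ = qPoch (c / a) (n + 1) / qPoch c (n + 1) := by
          rw [qPoch_succ, qPoch_succ]
          have hcY : (1 : K) - c * q ^ n ≠ 0 := one_sub_c_q_pow_ne n
          have hC : qPoch c n ≠ 0 := qPoch_c_ne n
          field_simp

end QCV

/-- q-Chu–Vandermonde:
`Σ_{j=0}^{n} (a;q)_j (q^{−n};q)_j (c qⁿ/a)^j / ((c;q)_j (q;q)_j)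
  = (c/a;q)ₙ / (c;q)ₙ`. -/
theorem q_chu_vandermonde (n : ℕ) :
    ∑ j ∈ Finset.range (n + 1),
      qPoch a j * qPoch (q ^ (-(n : ℤ))) j * (c * q ^ n / a) ^ j /
        (qPoch c j * qPoch q j) =
    qPoch (c / a) n / qPoch c n :=
  QCV.main n
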